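/- Let R : ℝⁿ → ℝⁿ and J : ℝⁿ → ℝ be twice continuously differentiable, and suppose R(u) = 0 with the Jacobian DR(u₀) invertible at a point u₀ near u. If z solves the discrete dual equation DR(u₀)ᵀ z = DJ(u₀)ᵀ, then J(u) = J(u₀) - zᵀ R(u₀) + O(‖u - u₀‖²). -/

import Mathlib

open RealInnerProductSpace

lemma dwr_taylor_aux {E F : Type*} [NormedAddCommGroup E] [NormedSpace ℝ E]
    [FiniteDimensional ℝ E] [NormedAddCommGroup F] [NormedSpace ℝ F]
    (f : E → F) (hf : ContDiff ℝ 2 f) (x₀ : E) :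
    ∃ C : ℝ, 0 < C ∧ ∀ x, ‖x - x₀‖ ≤ 1 →
      ‖f x - f x₀ - fderiv ℝ f x₀ (x - x₀)‖ ≤ C * ‖x - x₀‖ ^ 2 := by
  have hdf : ContDiff ℝ 1 (fderiv ℝ f) := hf.fderiv_right (by norm_num)
  have hcont : Continuous (fderiv ℝ (fderiv ℝ f)) :=
    hdf.continuous_fderiv one_ne_zero
  obtain ⟨L, hL⟩ := (isCompact_closedBall x₀ 1).exists_bound_of_continuousOn
    (Continuous.norm (E := E →L[ℝ] E →L[ℝ] F) (f := fderiv ℝ (fderiv ℝ f)) hcont).continuousOn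
  refine ⟨max L 0 + 1, by positivity, fun x hx => ?_⟩
  set r := ‖x - x₀‖ with hr
  have hr0 : 0 ≤ r := norm_nonneg _
  -- fderiv f is Lipschitz with constant L' on closedBall x₀ 1
  set L' : ℝ := max L 0 + 1
  have hball : Metric.closedBall x₀ r ⊆ Metric.closedBall x₀ 1 :=
    Metric.closedBall_subset_closedBall hx
  have hlip : ∀ y ∈ Metric.closedBall x₀ r,
      ‖fderiv ℝ f y - fderiv ℝ f x₀‖ ≤ L' * r := by
    intro y hy
    have h1 : ‖fderiv ℝ f y - fderiv ℝ f x₀‖ ≤ L' * ‖y - x₀‖ := by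
      apply (convex_closedBall x₀ (1:ℝ)).norm_image_sub_le_of_norm_hasFDerivWithin_le
        (f := fderiv ℝ f) (f' := fderiv ℝ (fderiv ℝ f))
        (fun w hw => ((hdf.differentiable one_ne_zero) w).hasFDerivAt.hasFDerivWithinAt)
        (fun w hw => by
          have h := hL w hw; rw [norm_norm] at h
          simp only [L']; linarith [le_max_left L 0])
        (Metric.mem_closedBall_self zero_le_one) (hball hy)
    have hyr : ‖y - x₀‖ ≤ r := by
      simp only [Metric.mem_closedBall, dist_eq_norm] at hy; exact hy
    calc ‖fderiv ℝ f y - fderiv ℝ f x₀‖ ≤ L' * ‖y - x₀‖ := h1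
      _ ≤ L' * r := by
          have : (0:ℝ) ≤ L' := by positivity
          nlinarith
  -- apply MVT to g y = f y - fderiv f x₀ y on closedBall x₀ r
  have hg : ∀ y ∈ Metric.closedBall x₀ r,
      HasFDerivWithinAt (fun w => f w - fderiv ℝ f x₀ w)
        (fderiv ℝ f y - fderiv ℝ f x₀) (Metric.closedBall x₀ r) y := by
    intro y hy
    exact (((hf.differentiable (by norm_num)) y).hasFDerivAt.sub
      (fderiv ℝ f x₀).hasFDerivAt).hasFDerivWithinAt
  have key := (convex_closedBall x₀ r).norm_image_sub_le_of_norm_hasFDerivWithin_le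
    hg hlip (Metric.mem_closedBall_self hr0)
    (by simp only [Metric.mem_closedBall, dist_eq_norm]; exact le_of_eq hr.symm : x ∈ Metric.closedBall x₀ r)
  have : f x - fderiv ℝ f x₀ x - (f x₀ - fderiv ℝ f x₀ x₀)
      = f x - f x₀ - fderiv ℝ f x₀ (x - x₀) := by
    rw [map_sub]; abel
  calc ‖f x - f x₀ - fderiv ℝ f x₀ (x - x₀)‖
      = ‖f x - fderiv ℝ f x₀ x - (f x₀ - fderiv ℝ f x₀ x₀)‖ := by rw [this]
    _ ≤ L' * r * ‖x - x₀‖ := key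
    _ = L' * ‖x - x₀‖ ^ 2 := by rw [hr]; ring

/-- Dual-weighted residual error representation: if `R(u) = 0`, `DR(u₀)` is invertible,
and `z` solves the discrete dual equation `DR(u₀)ᵀ z = DJ(u₀)ᵀ`, then
`J(u) = J(u₀) - zᵀ R(u₀) + O(‖u - u₀‖²)`. -/
theorem dwr_error_representation {n : ℕ}
    (R : EuclideanSpace ℝ (Fin n) → EuclideanSpace ℝ (Fin n))
    (J : EuclideanSpace ℝ (Fin n) → ℝ)
    (hR : ContDiff ℝ 2 R) (hJ : ContDiff ℝ 2 J)
    (u₀ : EuclideanSpace ℝ (Fin n))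
    (hinv : ∃ A : EuclideanSpace ℝ (Fin n) ≃L[ℝ] EuclideanSpace ℝ (Fin n),
      (A : EuclideanSpace ℝ (Fin n) →L[ℝ] EuclideanSpace ℝ (Fin n)) = fderiv ℝ R u₀)
    (z : EuclideanSpace ℝ (Fin n))
    (hz : ∀ v, ⟪z, fderiv ℝ R u₀ v⟫ = fderiv ℝ J u₀ v) :
    ∃ C δ : ℝ, 0 < C ∧ 0 < δ ∧ ∀ u, ‖u - u₀‖ < δ → R u = 0 →
      |J u - (J u₀ - ⟪z, R u₀⟫)| ≤ C * ‖u - u₀‖ ^ 2 := by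
  obtain ⟨CR, hCR, hRb⟩ := dwr_taylor_aux R hR u₀
  obtain ⟨CJ, hCJ, hJb⟩ := dwr_taylor_aux J hJ u₀
  refine ⟨CJ + ‖z‖ * CR + 1, 1, by positivity, one_pos, fun u hu hRu => ?_⟩
  have hu1 : ‖u - u₀‖ ≤ 1 := le_of_lt hu
  have key : J u - (J u₀ - ⟪z, R u₀⟫)
      = (J u - J u₀ - fderiv ℝ J u₀ (u - u₀))
        - ⟪z, R u - R u₀ - fderiv ℝ R u₀ (u - u₀)⟫ := by
    rw [hRu]
    have : ⟪z, (0 : EuclideanSpace ℝ (Fin n)) - R u₀ - fderiv ℝ R u₀ (u - u₀)⟫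
        = -⟪z, R u₀⟫ - fderiv ℝ J u₀ (u - u₀) := by
      rw [inner_sub_right, inner_sub_right, inner_zero_right, hz]
      ring
    rw [this]; ring
  rw [key]
  have h1 : |J u - J u₀ - fderiv ℝ J u₀ (u - u₀)| ≤ CJ * ‖u - u₀‖ ^ 2 := by
    simpa [Real.norm_eq_abs] using hJb u hu1
  have h2 : |⟪z, R u - R u₀ - fderiv ℝ R u₀ (u - u₀)⟫| ≤ ‖z‖ * (CR * ‖u - u₀‖ ^ 2) := by
    calc |⟪z, R u - R u₀ - fderiv ℝ R u₀ (u - u₀)⟫|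
        ≤ ‖z‖ * ‖R u - R u₀ - fderiv ℝ R u₀ (u - u₀)‖ := abs_real_inner_le_norm z _
      _ ≤ ‖z‖ * (CR * ‖u - u₀‖ ^ 2) := by
          exact mul_le_mul_of_nonneg_left (hRb u hu1) (norm_nonneg z)
  have := abs_sub (J u - J u₀ - fderiv ℝ J u₀ (u - u₀))
    (⟪z, R u - R u₀ - fderiv ℝ R u₀ (u - u₀)⟫)
  have hsq : (0:ℝ) ≤ ‖u - u₀‖ ^ 2 := by positivity
  calc |(J u - J u₀ - fderiv ℝ J u₀ (u - u₀))
        - ⟪z, R u - R u₀ - fderiv ℝ R u₀ (u - u₀)⟫|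
      ≤ |J u - J u₀ - fderiv ℝ J u₀ (u - u₀)|
        + |⟪z, R u - R u₀ - fderiv ℝ R u₀ (u - u₀)⟫| := abs_sub _ _
    _ ≤ CJ * ‖u - u₀‖ ^ 2 + ‖z‖ * (CR * ‖u - u₀‖ ^ 2) := add_le_add h1 h2
    _ ≤ (CJ + ‖z‖ * CR + 1) * ‖u - u₀‖ ^ 2 := by nlinarith
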